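/- If w ∈ W^J and α ∈ Φ⁺ \ Φ_J⁺ is a positive root not in the parabolic root subsystem, and ℓ(wr_α) = ℓ(w) + 1 (i.e., w ⋖ wr_α is a Bruhat cover), then wr_α is again a minimal-length coset representative, i.e., wr_α ∈ W^J. -/

import Mathlib

namespace BruhatAux
open CoxeterSystem List
open scoped Classical
variable {B W : Type*} [Group W] {M : CoxeterMatrix B} (cs : CoxeterSystem M W)

noncomputable def sig (i : B) : W × ℤˣ → W × ℤˣ :=
  fun x => (cs.simple i * x.1 * (cs.simple i)⁻¹, if x.1 = cs.simple i then -x.2 else x.2)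

lemma conj_eq_iff (a v t : W) : a * v * a⁻¹ = t ↔ v = a⁻¹ * t * a := by
  constructor
  · intro h; rw [← h]; group
  · intro h; rw [h]; group

lemma sig_invol (i : B) : Function.Involutive (sig cs i) := by
  rintro ⟨v, e⟩
  unfold sig
  simp only [Prod.mk.injEq]
  constructor
  · show cs.simple i * (cs.simple i * v * (cs.simple i)⁻¹) * (cs.simple i)⁻¹ = v
    rw [cs.inv_simple]
    have : cs.simple i * (cs.simple i * v * cs.simple i) * cs.simple i
        = (cs.simple i * cs.simple i) * v * (cs.simple i * cs.simple i) := by group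
    rw [this, cs.simple_mul_simple_self, one_mul, mul_one]
  · show (if cs.simple i * v * (cs.simple i)⁻¹ = cs.simple i then _ else _) = e
    rw [conj_eq_iff]
    have h2 : (cs.simple i)⁻¹ * cs.simple i * cs.simple i = cs.simple i := by group
    rw [h2]
    by_cases h : v = cs.simple i <;> simp [h]

noncomputable def sigp (i : B) : Equiv.Perm (W × ℤˣ) := (sig_invol cs i).toPerm

lemma sigp_apply (i : B) (x : W × ℤˣ) : sigp cs i x = sig cs i x := rfl

lemma braid (i j : B) : (sigp cs i * sigp cs j) ^ M i j = 1 := by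
  set m := M i j with hm
  have hp : (cs.simple i * cs.simple j) ^ m = 1 := cs.simple_mul_simple_pow i j
  set p := cs.simple i * cs.simple j with hpdef
  have h1 : cs.simple j * p = p⁻¹ * cs.simple j := by
    rw [hpdef, mul_inv_rev, cs.inv_simple, cs.inv_simple, mul_assoc]
  have hswap : ∀ a : ℕ, cs.simple j * p ^ a = (p ^ a)⁻¹ * cs.simple j := by
    intro a
    induction a with
    | zero => simp
    | succ a ih =>
      rw [pow_succ', ← mul_assoc, h1, mul_assoc, ih, ← mul_assoc, ← mul_inv_rev]
      rw [← pow_succ, ← pow_succ']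
  -- the sign factor
  set H : W → ℕ → ℤˣ := fun v n => if v = (p ^ n)⁻¹ * cs.simple j then -1 else 1 with hH
  have key : ∀ (k : ℕ) (v : W) (e : ℤˣ),
      ((sigp cs i * sigp cs j) ^ k) (v, e)
        = (p ^ k * v * (p ^ k)⁻¹, e * ∏ n ∈ Finset.range (2 * k), H v n) := by
    intro k
    induction k with
    | zero => intro v e; simp
    | succ k ih =>
      intro v e
      rw [pow_succ', Equiv.Perm.mul_apply, ih v e, Equiv.Perm.mul_apply, sigp_apply, sigp_apply]
      unfold sig
      simp only [Prod.mk.injEq]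
      constructor
      · have hgen : ∀ X : W, cs.simple i * (cs.simple j * X * (cs.simple j)⁻¹) *
            (cs.simple i)⁻¹ = p * X * p⁻¹ := by
          intro X; rw [hpdef]; group
        rw [hgen, pow_succ' p k]
        group
      · -- sign bookkeeping
        have hA : (p ^ k * v * (p ^ k)⁻¹ = cs.simple j) ↔ (v = (p ^ (2 * k))⁻¹ * cs.simple j) := by
          rw [conj_eq_iff]
          have : (p ^ k)⁻¹ * cs.simple j * p ^ k = (p ^ (2 * k))⁻¹ * cs.simple j := by
            rw [mul_assoc, hswap k, ← mul_assoc, ← mul_inv_rev, ← pow_add, two_mul]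
          rw [this]
        have hB : (cs.simple j * (p ^ k * v * (p ^ k)⁻¹) * (cs.simple j)⁻¹ = cs.simple i)
            ↔ (v = (p ^ (2 * k + 1))⁻¹ * cs.simple j) := by
          rw [conj_eq_iff, conj_eq_iff]
          have : (p ^ k)⁻¹ * ((cs.simple j)⁻¹ * cs.simple i * cs.simple j) * p ^ k
              = (p ^ (2 * k + 1))⁻¹ * cs.simple j := by
            rw [cs.inv_simple]
            have h2 : cs.simple j * cs.simple i * cs.simple j = p⁻¹ * cs.simple j := by
              rw [hpdef, mul_inv_rev, cs.inv_simple, cs.inv_simple]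
            rw [h2, mul_assoc, mul_assoc, hswap k, ← mul_assoc, ← mul_assoc, ← mul_inv_rev,
              ← mul_inv_rev]
            have h3 : p ^ k * (p * p ^ k) = p ^ (2 * k + 1) := by
              rw [two_mul, pow_add, pow_add, pow_one]; group
            rw [h3]
          rw [this]
        show (if cs.simple j * (p ^ k * v * (p ^ k)⁻¹) * (cs.simple j)⁻¹ = cs.simple i then
            -(if p ^ k * v * (p ^ k)⁻¹ = cs.simple j then -(e * ∏ n ∈ Finset.range (2 * k), H v n)
              else e * ∏ n ∈ Finset.range (2 * k), H v n)
            else (if p ^ k * v * (p ^ k)⁻¹ = cs.simple j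
              then -(e * ∏ n ∈ Finset.range (2 * k), H v n)
              else e * ∏ n ∈ Finset.range (2 * k), H v n))
            = e * ∏ n ∈ Finset.range (2 * (k + 1)), H v n
        have hrange : 2 * (k + 1) = (2 * k + 1) + 1 := by ring
        rw [hrange, Finset.prod_range_succ, Finset.prod_range_succ]
        simp only [hH]
        rw [if_congr hA rfl rfl, if_congr hB rfl rfl]
        by_cases hA' : v = (p ^ (2 * k))⁻¹ * cs.simple j <;>
          by_cases hB' : v = (p ^ (2 * k + 1))⁻¹ * cs.simple j <;>
          simp [hA', hB', mul_neg, mul_one, neg_neg]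
  apply Equiv.ext
  rintro ⟨v, e⟩
  rw [key m v e, hp]
  have h2m : ∀ n, H v (m + n) = H v n := by
    intro n
    simp only [hH, pow_add, hp, one_mul]
  have : ∏ n ∈ Finset.range (2 * m), H v n = 1 := by
    rw [two_mul, Finset.prod_range_add]
    have : ∏ n ∈ Finset.range m, H v (m + n) = ∏ n ∈ Finset.range m, H v n :=
      Finset.prod_congr rfl (fun n _ => h2m n)
    rw [this, Int.units_mul_self]
  rw [this, mul_one]
  simp
/-- The sign representation `W →* Perm (W × ℤˣ)`. -/
noncomputable def phi : W →* Equiv.Perm (W × ℤˣ) :=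
  cs.lift ⟨fun i => sigp cs i, fun i j => braid cs i j⟩

lemma phi_simple (i : B) : phi cs (cs.simple i) = sigp cs i :=
  cs.lift_apply_simple _ i

lemma phi_wordProd (ω : List B) (v : W) (e : ℤˣ) :
    phi cs (cs.wordProd ω) (v, e)
      = (cs.wordProd ω * v * (cs.wordProd ω)⁻¹,
          e * (-1 : ℤˣ) ^ ((cs.rightInvSeq ω).count v)) := by
  induction ω generalizing e with
  | nil => simp
  | cons a ω ih =>
    rw [cs.wordProd_cons, map_mul, Equiv.Perm.mul_apply, ih, phi_simple, sigp_apply]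
    unfold sig
    simp only [Prod.mk.injEq]
    have hris : cs.rightInvSeq (a :: ω)
        = ((cs.wordProd ω)⁻¹ * cs.simple a * cs.wordProd ω) :: cs.rightInvSeq ω := rfl
    constructor
    · group
    · rw [conj_eq_iff, hris, List.count_cons]
      by_cases h : v = (cs.wordProd ω)⁻¹ * cs.simple a * cs.wordProd ω
      · simp [h, pow_succ, mul_neg, mul_one]
      · have h' : ¬ ((cs.wordProd ω)⁻¹ * cs.simple a * cs.wordProd ω = v) :=
          fun hh => h hh.symm
        simp [h, h', mul_one]

/-- The sign `η(w; v)`. -/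
noncomputable def eta (w v : W) : ℤˣ := (phi cs w (v, 1)).2

lemma phi_apply (w v : W) (e : ℤˣ) : phi cs w (v, e) = (w * v * w⁻¹, e * eta cs w v) := by
  obtain ⟨ω, rfl⟩ := cs.wordProd_surjective w
  rw [phi_wordProd]
  unfold eta
  rw [phi_wordProd, one_mul]

lemma eta_wordProd (ω : List B) (v : W) :
    eta cs (cs.wordProd ω) v = (-1 : ℤˣ) ^ ((cs.rightInvSeq ω).count v) := by
  unfold eta; rw [phi_wordProd, one_mul]

lemma eta_one (v : W) : eta cs 1 v = 1 := by
  unfold eta; rw [map_one]; rfl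

lemma eta_mul (w₁ w₂ v : W) :
    eta cs (w₁ * w₂) v = eta cs w₂ v * eta cs w₁ (w₂ * v * w₂⁻¹) := by
  have h : phi cs (w₁ * w₂) (v, 1) = phi cs w₁ (phi cs w₂ (v, 1)) := by
    rw [map_mul, Equiv.Perm.mul_apply]
  unfold eta
  rw [h, phi_apply cs w₂ v 1, one_mul, phi_apply]
  rfl

lemma eta_simple (i : B) (v : W) :
    eta cs (cs.simple i) v = if v = cs.simple i then -1 else 1 := by
  unfold eta
  rw [phi_simple, sigp_apply]
  unfold sig
  by_cases h : v = cs.simple i <;> simp [h]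

lemma eta_refl_self {t : W} (ht : cs.IsReflection t) : eta cs t t = -1 := by
  obtain ⟨u, k, rfl⟩ := ht
  set t := u * cs.simple k * u⁻¹ with htd
  have h1 : u⁻¹ * t * u = cs.simple k := by rw [htd]; group
  have h2 : eta cs (u * u⁻¹) t = eta cs u⁻¹ t * eta cs u (cs.simple k) := by
    rw [eta_mul, inv_inv, h1]
  rw [mul_inv_cancel, eta_one] at h2
  have h3 : eta cs t t = eta cs u⁻¹ t * eta cs (u * cs.simple k) (cs.simple k) := by
    have : t = (u * cs.simple k) * u⁻¹ := htd
    nth_rewrite 1 [this]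
    rw [eta_mul, inv_inv, h1]
  have h4 : eta cs (u * cs.simple k) (cs.simple k) = - eta cs u (cs.simple k) := by
    rw [eta_mul, eta_simple, if_pos rfl]
    have : cs.simple k * cs.simple k * (cs.simple k)⁻¹ = cs.simple k := by group
    rw [this]
    rw [neg_one_mul]
  rw [h3, h4, mul_neg, ← h2]

lemma eta_neg_aux (n : ℕ) : ∀ w t : W, cs.length w = n → cs.IsReflection t →
    eta cs w t = -1 → cs.length (w * t) < cs.length w := by
  induction n using Nat.strong_induction_on with
  | _ n ih =>
    intro w t hlen ht hη
    rcases eq_or_ne w 1 with rfl | hw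
    · rw [eta_one] at hη
      exact absurd hη (by decide)
    · obtain ⟨i, hi⟩ := cs.exists_rightDescent_of_ne_one hw
      by_cases hts : t = cs.simple i
      · rw [hts]; exact hi
      · have hw' : cs.length (w * cs.simple i) + 1 = cs.length w := by
          rcases cs.length_mul_simple w i with h | h
          · exfalso
            have h5 : cs.length (w * cs.simple i) < cs.length w := hi
            omega
          · exact h
        set w' := w * cs.simple i with hw'def
        have hww' : w = w' * cs.simple i := by
          rw [hw'def, mul_assoc, cs.simple_mul_simple_self, mul_one]
        have hη' : eta cs w' (cs.simple i * t * (cs.simple i)⁻¹) = -1 := by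
          have := eta_mul cs w' (cs.simple i) t
          rw [← hww', hη, eta_simple, if_neg hts, one_mul] at this
          exact this.symm
        have hlt : cs.length w' < n := by omega
        have hrefl' : cs.IsReflection (cs.simple i * t * (cs.simple i)⁻¹) :=
          ht.conj (cs.simple i)
        have hIH := ih (cs.length w') hlt w' _ rfl hrefl' hη'
        have hkey : w' * (cs.simple i * t * (cs.simple i)⁻¹) = w * t * cs.simple i := by
          rw [hw'def, cs.inv_simple]
          have : w * cs.simple i * (cs.simple i * t * cs.simple i)
              = w * (cs.simple i * cs.simple i) * t * cs.simple i := by group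
          rw [this, cs.simple_mul_simple_self, mul_one]
        rw [hkey] at hIH
        have h1 : cs.length (w * t) ≤ cs.length (w * t * cs.simple i) + 1 := by
          have h2 : w * t = (w * t * cs.simple i) * cs.simple i := by
            rw [mul_assoc, cs.simple_mul_simple_self, mul_one]
          calc cs.length (w * t) = cs.length ((w * t * cs.simple i) * cs.simple i) := by
                rw [← h2]
            _ ≤ cs.length (w * t * cs.simple i) + cs.length (cs.simple i) :=
                cs.length_mul_le _ _
            _ = cs.length (w * t * cs.simple i) + 1 := by rw [cs.length_simple]
        omega

lemma eta_neg_of_lt {w t : W} (ht : cs.IsReflection t)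
    (hlt : cs.length (w * t) < cs.length w) : eta cs w t = -1 := by
  rcases Int.units_eq_one_or (eta cs w t) with h | h
  · exfalso
    have hη : eta cs (w * t) t = -1 := by
      rw [eta_mul, eta_refl_self cs ht]
      have h2 : t * t * t⁻¹ = t := by group
      rw [h2, h]
      decide
    have := eta_neg_aux cs (cs.length (w * t)) (w * t) t rfl ht hη
    rw [mul_assoc, ht.mul_self, mul_one] at this
    omega
  · exact h

lemma eta_neg_iff_lt {w t : W} (ht : cs.IsReflection t) :
    eta cs w t = -1 ↔ cs.length (w * t) < cs.length w := by
  constructor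
  · exact eta_neg_aux cs (cs.length w) w t rfl ht
  · exact eta_neg_of_lt cs ht

/-- **Strong exchange property.** -/
lemma strong_exchange {ω : List B} (hred : cs.IsReduced ω) {t : W} (ht : cs.IsReflection t)
    (hlt : cs.length (cs.wordProd ω * t) < cs.length (cs.wordProd ω)) :
    ∃ k, k < ω.length ∧ (cs.rightInvSeq ω).getD k 1 = t := by
  have hη := eta_neg_of_lt cs ht hlt
  rw [eta_wordProd] at hη
  have hcount : (cs.rightInvSeq ω).count t ≠ 0 := by
    intro h
    rw [h, pow_zero] at hη
    exact absurd hη (by decide)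
  have hmem : t ∈ cs.rightInvSeq ω := by
    by_contra hmem
    exact hcount (List.count_eq_zero.mpr hmem)
  obtain ⟨k, hk, hkt⟩ := List.mem_iff_getElem.mp hmem
  refine ⟨k, by simpa using hk, ?_⟩
  rw [List.getD_eq_getElem _ _ hk]
  exact hkt

/-- Exchange, product form. -/
lemma strong_exchange' {ω : List B} (hred : cs.IsReduced ω) {t : W} (ht : cs.IsReflection t)
    (hlt : cs.length (cs.wordProd ω * t) < cs.length (cs.wordProd ω)) :
    ∃ k, k < ω.length ∧ cs.wordProd ω * t = cs.wordProd (ω.eraseIdx k) := by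
  obtain ⟨k, hk, hkt⟩ := strong_exchange cs hred ht hlt
  exact ⟨k, hk, by rw [← hkt, cs.wordProd_mul_getD_rightInvSeq]⟩

/-- **Deletion property.** -/
lemma deletion {ω : List B} (h : cs.length (cs.wordProd ω) < ω.length) :
    ∃ j k, k < j ∧ j < ω.length ∧
      cs.wordProd ω = cs.wordProd ((ω.take j).eraseIdx k ++ ω.drop (j + 1)) := by
  classical
  have hex : ∃ n, ¬ cs.IsReduced (ω.take n) := by
    refine ⟨ω.length, ?_⟩
    rw [List.take_length]
    intro hred
    rw [CoxeterSystem.IsReduced] at hred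
    omega
  have hn0 : Nat.find hex ≠ 0 := by
    intro h0
    have hnred := Nat.find_spec hex
    rw [h0] at hnred
    exact hnred (by simp [CoxeterSystem.IsReduced])
  have hnle : Nat.find hex ≤ ω.length := by
    apply Nat.find_le
    rw [List.take_length]
    intro hred
    rw [CoxeterSystem.IsReduced] at hred
    omega
  obtain ⟨j, hj1⟩ : ∃ j, Nat.find hex = j + 1 := ⟨Nat.find hex - 1, by omega⟩
  have hnred : ¬ cs.IsReduced (ω.take (j + 1)) := by
    rw [← hj1]; exact Nat.find_spec hex
  have hj : j < ω.length := by omega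
  have hredj : cs.IsReduced (ω.take j) := by
    have := Nat.find_min hex (m := j) (by omega)
    exact not_not.mp this
  have hlenj : (ω.take j).length = j := by
    rw [List.length_take]; omega
  have htake : ω.take (j + 1) = ω.take j ++ [ω[j]] := by
    rw [List.take_succ, List.getElem?_eq_getElem hj]
    rfl
  have hv : cs.wordProd (ω.take (j + 1)) = cs.wordProd (ω.take j) * cs.simple ω[j] := by
    rw [htake, cs.wordProd_append, cs.wordProd_singleton]
  have hlt : cs.length (cs.wordProd (ω.take j) * cs.simple ω[j])
      < cs.length (cs.wordProd (ω.take j)) := by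
    have h1 : cs.length (cs.wordProd (ω.take (j + 1))) ≤ j + 1 := by
      have := cs.length_wordProd_le (ω.take (j + 1))
      rwa [List.length_take, min_eq_left (by omega : j + 1 ≤ ω.length)] at this
    have h2 : cs.length (cs.wordProd (ω.take (j + 1))) ≠ j + 1 := by
      intro hc
      apply hnred
      rw [CoxeterSystem.IsReduced, List.length_take, min_eq_left (by omega : j + 1 ≤ ω.length)]
      exact hc
    have h3 : cs.length (cs.wordProd (ω.take j)) = j := by
      rw [CoxeterSystem.IsReduced] at hredj
      rw [hredj, hlenj]
    have h4 := cs.length_mul_simple_ne (cs.wordProd (ω.take j)) ω[j]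
    rw [← hv, h3]
    rw [← hv, h3] at h4
    rw [← hv] at *
    omega
  obtain ⟨k, hk, hkey⟩ := strong_exchange' cs hredj (cs.isReflection_simple ω[j]) hlt
  rw [hlenj] at hk
  refine ⟨j, k, hk, hj, ?_⟩
  have hsplit : ω = ω.take (j + 1) ++ ω.drop (j + 1) := (List.take_append_drop _ _).symm
  calc cs.wordProd ω = cs.wordProd (ω.take (j + 1)) * cs.wordProd (ω.drop (j + 1)) := by
        nth_rewrite 1 [hsplit]; rw [cs.wordProd_append]
    _ = cs.wordProd (ω.take j) * cs.simple ω[j] * cs.wordProd (ω.drop (j + 1)) := by rw [hv]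
    _ = cs.wordProd ((ω.take j).eraseIdx k) * cs.wordProd (ω.drop (j + 1)) := by rw [hkey]
    _ = cs.wordProd ((ω.take j).eraseIdx k ++ ω.drop (j + 1)) := by rw [cs.wordProd_append]



section Parabolic

variable (J : Set B)

lemma wordProd_mem_closure {ω : List B} (hω : ∀ i ∈ ω, i ∈ J) :
    cs.wordProd ω ∈ Subgroup.closure (cs.simple '' J) := by
  induction ω with
  | nil => rw [cs.wordProd_nil]; exact Subgroup.one_mem _
  | cons a ω ih =>
    rw [cs.wordProd_cons]
    exact Subgroup.mul_mem _ (Subgroup.subset_closure ⟨a, hω a (by simp), rfl⟩)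
      (ih fun i hi => hω i (by simp [hi]))

lemma exists_JWord_of_mem {u : W} (hu : u ∈ Subgroup.closure (cs.simple '' J)) :
    ∃ ω : List B, (∀ i ∈ ω, i ∈ J) ∧ cs.wordProd ω = u := by
  induction hu using Subgroup.closure_induction with
  | mem x hx =>
    obtain ⟨i, hi, rfl⟩ := hx
    exact ⟨[i], by simp [hi], cs.wordProd_singleton i⟩
  | one => exact ⟨[], by simp, cs.wordProd_nil⟩
  | mul x y hx hy ihx ihy =>
    obtain ⟨ω₁, h1, rfl⟩ := ihx
    obtain ⟨ω₂, h2, rfl⟩ := ihy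
    refine ⟨ω₁ ++ ω₂, ?_, cs.wordProd_append ω₁ ω₂⟩
    intro i hi
    rcases List.mem_append.mp hi with h | h
    exacts [h1 i h, h2 i h]
  | inv x hx ihx =>
    obtain ⟨ω₁, h1, rfl⟩ := ihx
    exact ⟨ω₁.reverse, fun i hi => h1 i (List.mem_reverse.mp hi), cs.wordProd_reverse ω₁⟩

/-- Core computation: if `y` has minimal length in its coset `y·W_J` and `ρ` is a
minimal-length `J`-word, then lengths add. -/
lemma length_min_coset_add {y : W}
    (hy : ∀ u ∈ Subgroup.closure (cs.simple '' J), cs.length y ≤ cs.length (y * u))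
    {ρ : List B} (hρ : ∀ i ∈ ρ, i ∈ J)
    (hminρ : ∀ ρ' : List B, (∀ i ∈ ρ', i ∈ J) → cs.wordProd ρ' = cs.wordProd ρ →
      ρ.length ≤ ρ'.length) :
    cs.length (y * cs.wordProd ρ) = cs.length y + ρ.length := by
  obtain ⟨κ, hκlen, hκ⟩ := cs.exists_reduced_word y
  replace hκlen : cs.length y = κ.length := by rw [hκ]; exact hκlen
  have hΩ : cs.wordProd (κ ++ ρ) = y * cs.wordProd ρ := by
    rw [cs.wordProd_append, ← hκ]
  rcases eq_or_lt_of_le (cs.length_wordProd_le (κ ++ ρ)) with heq | hlt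
  · rw [hΩ] at heq
    rw [heq, List.length_append, hκlen]
  · rw [List.length_append] at hlt
    exfalso
    obtain ⟨j, k, hkj, hjlen, hdel⟩ := deletion cs (by rw [List.length_append]; exact hlt)
    rw [List.length_append] at hjlen
    rcases lt_or_ge j κ.length with hja | hja
    · -- both deleted letters in κ : contradicts κ reduced
      have htake : (κ ++ ρ).take j = κ.take j := by
        rw [List.take_append]
        have h0 : j - κ.length = 0 := by omega
        rw [h0, List.take_zero, List.append_nil]
      have hdrop : (κ ++ ρ).drop (j + 1) = κ.drop (j + 1) ++ ρ := by
        rw [List.drop_append]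
        have h0 : j + 1 - κ.length = 0 := by omega
        rw [h0, List.drop_zero]
      rw [htake, hdrop, hΩ, ← List.append_assoc, cs.wordProd_append] at hdel
      have hy' : y = cs.wordProd ((κ.take j).eraseIdx k ++ κ.drop (j + 1)) :=
        mul_right_cancel hdel
      have h5 := cs.length_wordProd_le ((κ.take j).eraseIdx k ++ κ.drop (j + 1))
      have h6 : k < (κ.take j).length := by rw [List.length_take]; omega
      have h7 := List.length_eraseIdx_add_one h6
      have h8 : (κ.take j).length = min j κ.length := List.length_take (i := j) (l := κ)
      have h9 : ((κ.take j).eraseIdx k ++ κ.drop (j + 1)).length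
          = ((κ.take j).eraseIdx k).length + (κ.length - (j + 1)) := by
        rw [List.length_append, List.length_drop]
      rw [← hy'] at h5
      omega
    · have htake : (κ ++ ρ).take j = κ ++ ρ.take (j - κ.length) := by
        rw [List.take_append, List.take_of_length_le (by omega : κ.length ≤ j)]
      have hdrop : (κ ++ ρ).drop (j + 1) = ρ.drop (j + 1 - κ.length) := by
        rw [List.drop_append, List.drop_of_length_le (by omega : κ.length ≤ j + 1)]
        rfl
      rcases lt_or_ge k κ.length with hka | hka
      · -- one deleted letter in κ, one in ρ : contradicts minimality of y
        have herase : ((κ ++ ρ).take j).eraseIdx k = κ.eraseIdx k ++ ρ.take (j - κ.length) := by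
          rw [htake, List.eraseIdx_append_of_lt_length (by omega : k < κ.length)]
        rw [herase, hdrop, hΩ] at hdel
        rw [List.append_assoc, cs.wordProd_append] at hdel
        set u₁ := cs.wordProd (ρ.take (j - κ.length) ++ ρ.drop (j + 1 - κ.length)) with hu₁
        have hu₁mem : u₁ ∈ Subgroup.closure (cs.simple '' J) := by
          apply wordProd_mem_closure
          intro i hi
          rcases List.mem_append.mp hi with h | h
          exacts [hρ i (List.mem_of_mem_take h), hρ i (List.mem_of_mem_drop h)]
        have hmem2 : cs.wordProd ρ * u₁⁻¹ ∈ Subgroup.closure (cs.simple '' J) :=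
          Subgroup.mul_mem _ (wordProd_mem_closure cs J hρ) (Subgroup.inv_mem _ hu₁mem)
        have heq2 : y * (cs.wordProd ρ * u₁⁻¹) = cs.wordProd (κ.eraseIdx k) := by
          rw [← mul_assoc]
          rw [hdel]
          group
        have hlen2 := hy _ hmem2
        rw [heq2] at hlen2
        have hlen3 := cs.length_wordProd_le (κ.eraseIdx k)
        have hlen4 := List.length_eraseIdx_add_one (show k < κ.length by omega)
        omega
      · -- both deleted letters in ρ : contradicts minimality of ρ
        have hkj' : k - κ.length < (ρ.take (j - κ.length)).length := by
          rw [List.length_take]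
          omega
        have herase : ((κ ++ ρ).take j).eraseIdx k = κ ++ (ρ.take (j - κ.length)).eraseIdx (k - κ.length) := by
          rw [htake, List.eraseIdx_append_of_length_le (by omega : κ.length ≤ k)]
        rw [herase, hdrop, hΩ, List.append_assoc, cs.wordProd_append, ← hκ] at hdel
        have hcancel : cs.wordProd ρ
            = cs.wordProd ((ρ.take (j - κ.length)).eraseIdx (k - κ.length) ++ ρ.drop (j + 1 - κ.length)) :=
          mul_left_cancel hdel
        have hJ' : ∀ i ∈ (ρ.take (j - κ.length)).eraseIdx (k - κ.length) ++ ρ.drop (j + 1 - κ.length), i ∈ J := by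
          intro i hi
          rcases List.mem_append.mp hi with h | h
          · exact hρ i (List.mem_of_mem_take (List.mem_of_mem_eraseIdx h))
          · exact hρ i (List.mem_of_mem_drop h)
        have := hminρ _ hJ' hcancel.symm
        have h5 := List.length_eraseIdx_add_one hkj'
        rw [List.length_append, List.length_drop] at this
        have h6 : (ρ.take (j - κ.length)).length = min (j - κ.length) ρ.length := List.length_take
        omega

end Parabolic
lemma exists_min_JWord (J : Set B) {u : W} (hu : u ∈ Subgroup.closure (cs.simple '' J)) :
    ∃ ρ : List B, (∀ i ∈ ρ, i ∈ J) ∧ cs.wordProd ρ = u ∧ ρ.length = cs.length u := by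
  classical
  have hex : ∃ n, ∃ ρ : List B, (∀ i ∈ ρ, i ∈ J) ∧ cs.wordProd ρ = u ∧ ρ.length = n := by
    obtain ⟨ρ, h1, h2⟩ := exists_JWord_of_mem cs J hu
    exact ⟨ρ.length, ρ, h1, h2, rfl⟩
  obtain ⟨ρ, h1, h2, h3⟩ := Nat.find_spec hex
  have hminρ : ∀ ρ' : List B, (∀ i ∈ ρ', i ∈ J) → cs.wordProd ρ' = cs.wordProd ρ →
      ρ.length ≤ ρ'.length := by
    intro ρ' hJ' heq
    rw [h3]
    exact Nat.find_le ⟨ρ', hJ', by rw [heq, h2], rfl⟩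
  have hkey := length_min_coset_add cs J (y := 1)
    (by intro v hv; rw [cs.length_one]; exact Nat.zero_le _) h1 hminρ
  rw [one_mul, h2, cs.length_one, Nat.zero_add] at hkey
  exact ⟨ρ, h1, h2, hkey.symm⟩

lemma length_min_coset_mul (J : Set B) {y u : W}
    (hy : ∀ v ∈ Subgroup.closure (cs.simple '' J), cs.length y ≤ cs.length (y * v))
    (hu : u ∈ Subgroup.closure (cs.simple '' J)) :
    cs.length (y * u) = cs.length y + cs.length u := by
  obtain ⟨ρ, h1, h2, h3⟩ := exists_min_JWord cs J hu
  have hminρ : ∀ ρ' : List B, (∀ i ∈ ρ', i ∈ J) → cs.wordProd ρ' = cs.wordProd ρ →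
      ρ.length ≤ ρ'.length := by
    intro ρ' hJ' heq
    have h4 := cs.length_wordProd_le ρ'
    rw [heq, h2] at h4
    omega
  have := length_min_coset_add cs J hy h1 hminρ
  rw [h2, h3] at this
  exact this

lemma exists_J_descent (J : Set B) {u : W} (hu : u ∈ Subgroup.closure (cs.simple '' J)) (hne : u ≠ 1) :
    ∃ j ∈ J, ∃ u', u' ∈ Subgroup.closure (cs.simple '' J) ∧ u = u' * cs.simple j ∧
      cs.length u' < cs.length u := by
  obtain ⟨ρ, h1, h2, h3⟩ := exists_min_JWord cs J hu
  have hρne : ρ ≠ [] := by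
    rintro rfl
    rw [cs.wordProd_nil] at h2
    exact hne h2.symm
  refine ⟨ρ.getLast hρne, h1 _ (List.getLast_mem hρne), cs.wordProd ρ.dropLast, ?_, ?_, ?_⟩
  · exact wordProd_mem_closure cs J (fun i hi => h1 i (List.mem_of_mem_dropLast hi))
  · rw [← h2]
    conv_lhs => rw [← List.dropLast_append_getLast hρne]
    rw [cs.wordProd_append, cs.wordProd_singleton]
  · have h4 := cs.length_wordProd_le ρ.dropLast
    rw [List.length_dropLast] at h4
    have h5 : 0 < ρ.length := List.length_pos_iff.mpr hρne
    omega

end BruhatAux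

/-- Let `W` be a finite Weyl group with positive roots `Pos`,
`J` a subset of the simple indices, `W_J` the corresponding parabolic subgroup and
`PosJ = Φ_J⁺` the positive roots of the parabolic subsystem (characterized as the
positive roots whose reflection lies in `W_J`).  If `w ∈ W^J` (i.e. `w` has minimal
length in its coset `w W_J`), `α ∈ Φ⁺ \ Φ_J⁺`, and `ℓ(w r_α) = ℓ(w) + 1`
(a Bruhat cover), then `w r_α ∈ W^J` as well. -/
theorem bruhat_edge_stays_minimal
    {B W V : Type*} [Group W] [Finite W] [AddCommGroup V] {M : CoxeterMatrix B}
    (cs : CoxeterSystem M W)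
    (Pos : Set V) (refl : V → W)
    (hrefl : ∀ α ∈ Pos, cs.IsReflection (refl α))
    (J : Set B) (WJ : Subgroup W)
    (hWJ : WJ = Subgroup.closure (cs.simple '' J))
    (PosJ : Set V)
    (hPosJ : ∀ α, α ∈ PosJ ↔ (α ∈ Pos ∧ refl α ∈ WJ))
    (w : W)
    (hmin : ∀ u ∈ WJ, cs.length w ≤ cs.length (w * u))
    (α : V) (hα : α ∈ Pos) (hαJ : α ∉ PosJ)
    (hcov : cs.length (w * refl α) = cs.length w + 1) :
    ∀ u ∈ WJ, cs.length (w * refl α) ≤ cs.length (w * refl α * u) := by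
  classical
  open BruhatAux in
  subst hWJ
  set t := refl α with htdef
  have ht : cs.IsReflection t := hrefl α hα
  have htJ : t ∉ Subgroup.closure (cs.simple '' J) := fun hmem =>
    hαJ ((hPosJ α).mpr ⟨hα, hmem⟩)
  -- Step 1: `w * t` has no right descents in `J`.
  have lemD : ∀ j ∈ J, ¬ cs.length (w * t * cs.simple j) < cs.length (w * t) := by
    intro j hjJ hneg
    have hsj : cs.simple j ∈ Subgroup.closure (cs.simple '' J) :=
      Subgroup.subset_closure ⟨j, hjJ, rfl⟩
    have hxsj : cs.length (w * t * cs.simple j) + 1 = cs.length (w * t) := by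
      rcases cs.length_mul_simple (w * t) j with h | h
      · omega
      · exact h
    obtain ⟨ω', hω'len, hω'⟩ := cs.exists_reduced_word (w * t * cs.simple j)
    rw [CoxeterSystem.IsReduced, ← hω'] at hω'len
    have hΩprod : cs.wordProd (ω'.concat j) = w * t := by
      rw [cs.wordProd_concat, ← hω', mul_assoc, cs.simple_mul_simple_self, mul_one]
    have hΩred : cs.IsReduced (ω'.concat j) := by
      rw [CoxeterSystem.IsReduced, hΩprod, List.length_concat]
      omega
    have hlt : cs.length (cs.wordProd (ω'.concat j) * t)
        < cs.length (cs.wordProd (ω'.concat j)) := by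
      rw [hΩprod, mul_assoc, ht.mul_self, mul_one, hcov]
      omega
    obtain ⟨k, hk, hkt⟩ := BruhatAux.strong_exchange cs hΩred ht hlt
    rw [List.length_concat] at hk
    rcases lt_or_ge k ω'.length with hk' | hk'
    · have herase : (ω'.concat j).eraseIdx k = (ω'.eraseIdx k).concat j := by
        rw [List.concat_eq_append, List.concat_eq_append,
          List.eraseIdx_append_of_lt_length hk']
      have hprod : w = cs.wordProd ((ω'.eraseIdx k).concat j) := by
        rw [← herase, ← cs.wordProd_mul_getD_rightInvSeq, hkt, hΩprod, mul_assoc,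
          ht.mul_self, mul_one]
      have h5 : cs.length (w * cs.simple j) ≤ ω'.length - 1 := by
        have h6 : w * cs.simple j = cs.wordProd (ω'.eraseIdx k) := by
          rw [hprod, cs.wordProd_concat, mul_assoc, cs.simple_mul_simple_self, mul_one]
        rw [h6]
        have h7 := cs.length_wordProd_le (ω'.eraseIdx k)
        have h8 := List.length_eraseIdx_add_one hk'
        omega
      have h9 := hmin (cs.simple j) hsj
      have h10 := cs.length_mul_simple_ne w j
      omega
    · have hkeq : k = ω'.length := by omega
      have hmap : (List.map (⇑(MulAut.conj (cs.simple j))) (cs.rightInvSeq ω')).length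
          = ω'.length := by
        rw [List.length_map, cs.length_rightInvSeq]
      have hgd : (cs.rightInvSeq (ω'.concat j)).getD k 1 = cs.simple j := by
        rw [cs.rightInvSeq_concat, List.concat_eq_append,
          List.getD_append_right _ _ _ _ (by omega)]
        rw [hmap, hkeq]
        simp
      have : t = cs.simple j := by rw [← hkt, hgd]
      exact htJ (this ▸ hsj)
  -- Step 2: minimal length representative of the coset `(w*t)·W_J`.
  have hex : ∃ n, ∃ u₀, u₀ ∈ Subgroup.closure (cs.simple '' J) ∧
      cs.length (w * t * u₀) = n :=
    ⟨cs.length (w * t * 1), 1, Subgroup.one_mem _, rfl⟩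
  obtain ⟨u₀, hu₀mem, hu₀len⟩ := Nat.find_spec hex
  have hymin : ∀ v ∈ Subgroup.closure (cs.simple '' J),
      cs.length (w * t * u₀) ≤ cs.length ((w * t * u₀) * v) := by
    intro v hv
    rw [hu₀len, mul_assoc]
    exact Nat.find_le ⟨u₀ * v, Subgroup.mul_mem _ hu₀mem hv, rfl⟩
  rcases eq_or_ne u₀ 1 with rfl | hne
  · intro u hu
    have := hymin u hu
    simpa only [mul_one] using this
  · exfalso
    have hinv : u₀⁻¹ ∈ Subgroup.closure (cs.simple '' J) := Subgroup.inv_mem _ hu₀mem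
    have hinvne : u₀⁻¹ ≠ 1 := by simpa using hne
    obtain ⟨j, hjJ, u', hu'mem, hu'eq, hu'lt⟩ := exists_J_descent cs J hinv hinvne
    have h1 : cs.length (w * t) = cs.length (w * t * u₀) + cs.length u₀⁻¹ := by
      have := length_min_coset_mul cs J hymin hinv
      have hxy : (w * t * u₀) * u₀⁻¹ = w * t := by group
      rw [hxy] at this
      exact this
    have h2 : cs.length (w * t * cs.simple j) = cs.length (w * t * u₀) + cs.length u' := by
      have h3 := length_min_coset_mul cs J hymin hu'mem
      have hu'2 : u' = u₀⁻¹ * (cs.simple j)⁻¹ := by rw [hu'eq]; group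
      have he : (w * t * u₀) * u' = w * t * cs.simple j := by
        rw [hu'2, cs.inv_simple]
        group
      rw [he] at h3
      exact h3
    exact lemD j hjJ (by omega)
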